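/- arXiv:1801.08686 — 3 statements merged into one kernel-verified Lean document; each statement's English description precedes it below -/
import Mathlib

section
/- Let G ≥ 1, q ∈ (0,1), and let p̃_1, …, p̃_G ∈ [0,1] be pairwise distinct p-values. Let Ĝ ⊆ {1,…,G} denote the Benjamini–Hochberg rejection set at level q (the set of indices of the K₀ smallest p-values, where K₀ = max{k : p̃_(k) ≤ k·q/G}, with K₀ = 0 and Ĝ = ∅ if this set is empty). Fix K₀ ≥ 1 and a subset 𝒢 ⊆ {1,…,G} with |𝒢| = K₀. Then Ĝ = 𝒢 if and only if both of the following hold: (a) p̃_g ≤ K₀·q/G for every g ∈ 𝒢, and (b) for every k ∈ {1,…,G−K₀}, the k-th smallest element of {p̃_{g′} : g′ ∉ 𝒢} is strictly greater than (K₀+k)·q/G. In particular, the event that a given gene g is rejected with rejection set of size K₀ factors as the intersection of a condition depending only on p̃_g (and the genes in 𝒢) and a condition depending only on the p-values of genes outside 𝒢. -/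
private lemma sort_getD_lt (T : Finset ℝ) {a b : ℕ} (hab : a < b) (hb : b < T.card) :
    (T.sort (· ≤ ·)).getD a 0 < (T.sort (· ≤ ·)).getD b 0 := by
  have hlen : (T.sort (· ≤ ·)).length = T.card := Finset.length_sort _
  rw [List.getD_eq_getElem _ 0 (by omega), List.getD_eq_getElem _ 0 (by omega)]
  exact T.sortedLT_sort.getElem_lt_getElem_of_lt hab

private lemma sort_getD_le (T : Finset ℝ) {a b : ℕ} (hab : a ≤ b) (hb : b < T.card) :
    (T.sort (· ≤ ·)).getD a 0 ≤ (T.sort (· ≤ ·)).getD b 0 := by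
  rcases eq_or_lt_of_le hab with rfl | h
  · exact le_refl _
  · exact (sort_getD_lt T h hb).le

private lemma sort_getD_mem (T : Finset ℝ) {i : ℕ} (hi : i < T.card) :
    (T.sort (· ≤ ·)).getD i 0 ∈ T := by
  have hlen : (T.sort (· ≤ ·)).length = T.card := Finset.length_sort _
  rw [List.getD_eq_getElem _ 0 (by omega)]
  exact (Finset.mem_sort _).1 (List.getElem_mem _)

private lemma card_filter_le_sort (T : Finset ℝ) {i : ℕ} (hi : i < T.card) :
    (T.filter (· ≤ (T.sort (· ≤ ·)).getD i 0)).card = i + 1 := by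
  have hlen : (T.sort (· ≤ ·)).length = T.card := Finset.length_sort _
  have hi' : i < (T.sort (· ≤ ·)).length := by omega
  have himg : T.filter (· ≤ (T.sort (· ≤ ·)).getD i 0)
      = (Finset.range (i+1)).image (fun j => (T.sort (· ≤ ·)).getD j 0) := by
    ext x
    simp only [Finset.mem_filter, Finset.mem_image, Finset.mem_range]
    constructor
    · rintro ⟨hxT, hxle⟩
      have hxl : x ∈ T.sort (· ≤ ·) := (Finset.mem_sort _).2 hxT
      obtain ⟨j, hj, hjx⟩ := List.mem_iff_getElem.1 hxl
      refine ⟨j, ?_, by rw [List.getD_eq_getElem _ 0 hj, hjx]⟩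
      by_contra hc
      have h2 : (T.sort (· ≤ ·)).getD i 0 < (T.sort (· ≤ ·)).getD j 0 :=
        sort_getD_lt T (by omega) (by omega)
      rw [List.getD_eq_getElem _ 0 hj, hjx] at h2
      exact absurd hxle (not_le.2 h2)
    · rintro ⟨j, hj, rfl⟩
      exact ⟨sort_getD_mem T (by omega), sort_getD_le T (by omega) (by omega)⟩
  rw [himg, Finset.card_image_of_injOn, Finset.card_range]
  intro a ha b hb hab
  simp only [Finset.coe_range, Set.mem_Iio] at ha hb
  by_contra hne
  rcases Nat.lt_or_ge a b with h | h
  · exact absurd hab (ne_of_lt (sort_getD_lt T h (by omega)))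
  · exact absurd hab.symm (ne_of_lt (sort_getD_lt T (by omega) (by omega)))

private lemma sort_getD_rank {T : Finset ℝ} {v : ℝ} (hv : v ∈ T) :
    (T.sort (· ≤ ·)).getD ((T.filter (· ≤ v)).card - 1) 0 = v := by
  have hlen : (T.sort (· ≤ ·)).length = T.card := Finset.length_sort _
  obtain ⟨j, hj, hjx⟩ := List.mem_iff_getElem.1 ((Finset.mem_sort (· ≤ ·)).2 hv)
  have hvj : v = (T.sort (· ≤ ·)).getD j 0 := by rw [List.getD_eq_getElem _ 0 hj, hjx]
  rw [hvj, card_filter_le_sort T (by omega)]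
  simp

private lemma rank_le_iff {T : Finset ℝ} {v : ℝ} (hv : v ∈ T) {k : ℕ}
    (hk1 : 1 ≤ k) (hk2 : k ≤ T.card) :
    (T.filter (· ≤ v)).card ≤ k ↔ v ≤ (T.sort (· ≤ ·)).getD (k - 1) 0 := by
  have hlen : (T.sort (· ≤ ·)).length = T.card := Finset.length_sort _
  obtain ⟨j, hj, hjx⟩ := List.mem_iff_getElem.1 ((Finset.mem_sort (· ≤ ·)).2 hv)
  have hvj : v = (T.sort (· ≤ ·)).getD j 0 := by rw [List.getD_eq_getElem _ 0 hj, hjx]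
  have hcardf : (T.filter (· ≤ v)).card = j + 1 := by
    rw [hvj]; exact card_filter_le_sort T (by omega)
  rw [hcardf, hvj]
  constructor
  · intro h
    exact sort_getD_le T (by omega) (by omega)
  · intro h
    by_contra hc
    exact absurd h (not_le.2 (sort_getD_lt T (by omega) (by omega)))

private lemma sort_getD_zero_le {T : Finset ℝ} {v : ℝ} (hv : v ∈ T) :
    (T.sort (· ≤ ·)).getD 0 0 ≤ v := by
  obtain ⟨j, hj, hjx⟩ := List.mem_iff_getElem.1 ((Finset.mem_sort (· ≤ ·)).2 hv)
  have h := sort_getD_le T (Nat.zero_le j)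
    (by rw [← Finset.length_sort (α := ℝ) (· ≤ ·)]; exact hj)
  rwa [List.getD_eq_getElem _ 0 hj, hjx] at h

private lemma sort_union_append (A B : Finset ℝ) (hAB : ∀ a ∈ A, ∀ b ∈ B, a < b) :
    (A ∪ B).sort (· ≤ ·) = A.sort (· ≤ ·) ++ B.sort (· ≤ ·) := by
  have hdisj : Disjoint A B :=
    Finset.disjoint_left.2 fun {a} ha hb => absurd (hAB a ha a hb) (lt_irrefl a)
  have hval : (A ∪ B).val = A.val + B.val := by
    rw [← Finset.disjUnion_eq_union A B hdisj]; rfl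
  have hperm : List.Perm ((A ∪ B).sort (· ≤ ·)) (A.sort (· ≤ ·) ++ B.sort (· ≤ ·)) := by
    refine Quotient.exact (α := List ℝ) ?_
    show ((A ∪ B).sort (· ≤ ·) : Multiset ℝ) = ↑(A.sort (· ≤ ·) ++ B.sort (· ≤ ·))
    rw [Finset.sort_eq, hval, ← Finset.sort_eq (s := A) (· ≤ ·), ← Finset.sort_eq (s := B) (· ≤ ·)]
    rfl
  refine List.Perm.eq_of_pairwise' (Finset.pairwise_sort _ _) ?_ hperm
  rw [List.pairwise_append]
  exact ⟨Finset.pairwise_sort _ _, Finset.pairwise_sort _ _,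
    fun a ha b hb => (hAB a ((Finset.mem_sort _).1 ha) b ((Finset.mem_sort _).1 hb)).le⟩



/-- The list of p-values of the genes in the index set `I`, sorted in increasing order. -/
noncomputable def sortedPvals (I : Finset ℕ) (p : ℕ → ℝ) : List ℝ :=
  (I.image p).sort (· ≤ ·)

/-- The `k`-th smallest p-value (for `k = 1, 2, …`) among the genes in `I`. -/
noncomputable def orderStat (I : Finset ℕ) (p : ℕ → ℝ) (k : ℕ) : ℝ :=
  (sortedPvals I p).getD (k - 1) 0

/-- The number `K₀` of Benjamini–Hochberg rejections at level `q` for the p-values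
`p g`, `g ∈ {1,…,G}`: the largest `k` with `p_(k) ≤ k·q/G`, and `0` if there is no such `k`. -/
noncomputable def bhCount (G : ℕ) (q : ℝ) (p : ℕ → ℝ) : ℕ :=
  if h : ((Finset.Icc 1 G).filter
      (fun k => orderStat (Finset.Icc 1 G) p k ≤ (k : ℝ) * q / G)).Nonempty
  then ((Finset.Icc 1 G).filter
      (fun k => orderStat (Finset.Icc 1 G) p k ≤ (k : ℝ) * q / G)).max' h
  else 0

/-- The Benjamini–Hochberg rejection set: the indices of the `bhCount` smallest p-values. -/
noncomputable def bhRejectionSet (G : ℕ) (q : ℝ) (p : ℕ → ℝ) : Finset ℕ :=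
  (Finset.Icc 1 G).filter
    (fun g => ((Finset.Icc 1 G).filter (fun g' => p g' ≤ p g)).card ≤ bhCount G q p)

/-- Separability of the BH selection event: for pairwise distinct p-values, the BH rejection
set equals a given set `𝒢` of cardinality `K₀ ≥ 1` if and only if (a) every p-value in `𝒢` is
at most `K₀·q/G`, and (b) for every `k ∈ {1,…,G−K₀}` the `k`-th smallest p-value outside `𝒢`
is strictly greater than `(K₀+k)·q/G`. -/

theorem bh_rejection_set_separability
    (G : ℕ) (hG : 1 ≤ G) (q : ℝ) (hq : 0 < q) (hq1 : q < 1)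
    (p : ℕ → ℝ) (hp01 : ∀ g ∈ Finset.Icc 1 G, p g ∈ Set.Icc (0 : ℝ) 1)
    (hdistinct : Set.InjOn p (Finset.Icc 1 G : Set ℕ))
    (K₀ : ℕ) (hK₀ : 1 ≤ K₀) (𝒢 : Finset ℕ) (h𝒢 : 𝒢 ⊆ Finset.Icc 1 G)
    (hcard : 𝒢.card = K₀) :
    bhRejectionSet G q p = 𝒢 ↔
      ((∀ g ∈ 𝒢, p g ≤ (K₀ : ℝ) * q / G) ∧
        ∀ k ∈ Finset.Icc 1 (G - K₀),
          orderStat (Finset.Icc 1 G \ 𝒢) p k > ((K₀ : ℝ) + k) * q / G) := by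
  have hIcard : (Finset.Icc 1 G).card = G := by rw [Nat.card_Icc]; omega
  have hTcard : ((Finset.Icc 1 G).image p).card = G := by
    rw [Finset.card_image_of_injOn hdistinct, hIcard]
  have hGpos : (0:ℝ) < G := by exact_mod_cast (by omega : 0 < G)
  have hqG : (0:ℝ) < q / G := div_pos hq hGpos
  have hK₀G : K₀ ≤ G := by
    have := Finset.card_le_card h𝒢
    omega
  have hOcard : (Finset.Icc 1 G \ 𝒢).card = G - K₀ := by
    rw [Finset.card_sdiff_of_subset h𝒢, hIcard, hcard]
  have hOSdef : ∀ (k : ℕ), orderStat (Finset.Icc 1 G) p k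
      = (((Finset.Icc 1 G).image p).sort (· ≤ ·)).getD (k - 1) 0 := fun k => rfl
  have hRdef : bhRejectionSet G q p = (Finset.Icc 1 G).filter
      (fun g => ((Finset.Icc 1 G).filter (fun g' => p g' ≤ p g)).card ≤ bhCount G q p) := rfl
  have hrank_pos : ∀ g ∈ Finset.Icc 1 G,
      1 ≤ ((Finset.Icc 1 G).filter (fun g' => p g' ≤ p g)).card := fun g hg =>
    Finset.card_pos.2 ⟨g, Finset.mem_filter.2 ⟨hg, le_refl _⟩⟩
  have hrank_le : ∀ g ∈ Finset.Icc 1 G,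
      ((Finset.Icc 1 G).filter (fun g' => p g' ≤ p g)).card ≤ G := fun g _ => by
    have := Finset.card_le_card (Finset.filter_subset (fun g' => p g' ≤ p g) (Finset.Icc 1 G))
    omega
  have hrank : ∀ g ∈ Finset.Icc 1 G,
      ((Finset.Icc 1 G).filter (fun g' => p g' ≤ p g)).card
        = (((Finset.Icc 1 G).image p).filter (· ≤ p g)).card := by
    intro g hg
    have himg : ((Finset.Icc 1 G).filter (fun g' => p g' ≤ p g)).image p
        = ((Finset.Icc 1 G).image p).filter (· ≤ p g) := by
      ext x
      simp only [Finset.mem_image, Finset.mem_filter]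
      constructor
      · rintro ⟨g', ⟨hg', hle⟩, rfl⟩; exact ⟨⟨g', hg', rfl⟩, hle⟩
      · rintro ⟨⟨g', hg', rfl⟩, hle⟩; exact ⟨g', ⟨hg', hle⟩, rfl⟩
    rw [← himg]
    exact (Finset.card_image_of_injOn (hdistinct.mono (by
      intro x hx
      exact Finset.mem_coe.2 (Finset.filter_subset _ _ (Finset.mem_coe.1 hx))))).symm
  -- separation implies the order-statistic splitting
  have key : (∀ g ∈ 𝒢, ∀ g' ∈ Finset.Icc 1 G \ 𝒢, p g < p g') →
      (∀ k, 1 ≤ k → k ≤ K₀ → orderStat (Finset.Icc 1 G) p k = orderStat 𝒢 p k) ∧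
      (∀ k, 1 ≤ k → orderStat (Finset.Icc 1 G) p (K₀ + k)
        = orderStat (Finset.Icc 1 G \ 𝒢) p k) := by
    intro hSep
    have hunion : 𝒢 ∪ (Finset.Icc 1 G \ 𝒢) = Finset.Icc 1 G := Finset.union_sdiff_of_subset h𝒢
    have himgsep : ∀ a ∈ 𝒢.image p, ∀ b ∈ (Finset.Icc 1 G \ 𝒢).image p, a < b := by
      intro a ha b hb
      obtain ⟨g, hg, rfl⟩ := Finset.mem_image.1 ha
      obtain ⟨g', hg', rfl⟩ := Finset.mem_image.1 hb
      exact hSep g hg g' hg'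
    have hsplit : sortedPvals (Finset.Icc 1 G) p
        = sortedPvals 𝒢 p ++ sortedPvals (Finset.Icc 1 G \ 𝒢) p := by
      unfold sortedPvals
      have himgu : (Finset.Icc 1 G).image p
          = 𝒢.image p ∪ (Finset.Icc 1 G \ 𝒢).image p := by
        rw [← Finset.image_union, hunion]
      rw [himgu]
      exact sort_union_append _ _ himgsep
    have hlen𝒢 : (sortedPvals 𝒢 p).length = K₀ := by
      unfold sortedPvals
      rw [Finset.length_sort,
        Finset.card_image_of_injOn (hdistinct.mono (Finset.coe_subset.2 h𝒢)), hcard]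
    constructor
    · intro k hk1 hk2
      unfold orderStat
      rw [hsplit, List.getD_append _ _ _ _ (by omega)]
    · intro k hk1
      unfold orderStat
      rw [hsplit, List.getD_append_right _ _ _ _ (by omega)]
      congr 1
      omega
  constructor
  · -- forward direction
    intro hR
    have hne : ((Finset.Icc 1 G).filter
        (fun k => orderStat (Finset.Icc 1 G) p k ≤ (k : ℝ) * q / G)).Nonempty := by
      by_contra hne
      have h0 : bhCount G q p = 0 := by unfold bhCount; rw [dif_neg hne]
      obtain ⟨g, hg⟩ := Finset.card_pos.1 (show 0 < 𝒢.card by omega)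
      rw [← hR, hRdef] at hg
      obtain ⟨hg1, hg2⟩ := Finset.mem_filter.1 hg
      rw [h0] at hg2
      have := hrank_pos g hg1
      omega
    have hKval : bhCount G q p = ((Finset.Icc 1 G).filter
        (fun k => orderStat (Finset.Icc 1 G) p k ≤ (k : ℝ) * q / G)).max' hne := by
      unfold bhCount; rw [dif_pos hne]
    have hKmem : bhCount G q p ∈ (Finset.Icc 1 G).filter
        (fun k => orderStat (Finset.Icc 1 G) p k ≤ (k : ℝ) * q / G) := by
      rw [hKval]; exact Finset.max'_mem _ hne
    have hKle : ∀ k ∈ (Finset.Icc 1 G).filter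
        (fun k => orderStat (Finset.Icc 1 G) p k ≤ (k : ℝ) * q / G), k ≤ bhCount G q p := by
      intro k hk; rw [hKval]; exact Finset.le_max' _ k hk
    obtain ⟨hKI, hKineq⟩ := Finset.mem_filter.1 hKmem
    obtain ⟨hK1, hKG⟩ := Finset.mem_Icc.1 hKI
    -- rank is injective on Icc 1 G
    have hrank_inj : ∀ g ∈ Finset.Icc 1 G, ∀ g' ∈ Finset.Icc 1 G,
        ((Finset.Icc 1 G).filter (fun x => p x ≤ p g)).card
          = ((Finset.Icc 1 G).filter (fun x => p x ≤ p g')).card → g = g' := by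
      intro g hg g' hg' h
      have e1 := sort_getD_rank (Finset.mem_image_of_mem p hg)
      have e2 := sort_getD_rank (Finset.mem_image_of_mem p hg')
      have h1 : p g = p g' := by
        rw [← e1, ← e2, ← hrank g hg, ← hrank g' hg', h]
      exact hdistinct (Finset.mem_coe.2 hg) (Finset.mem_coe.2 hg') h1
    have himg_rank : (Finset.Icc 1 G).image
        (fun g => ((Finset.Icc 1 G).filter (fun g' => p g' ≤ p g)).card) = Finset.Icc 1 G := by
      apply Finset.eq_of_subset_of_card_le
      · intro x hx
        obtain ⟨g, hg, rfl⟩ := Finset.mem_image.1 hx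
        exact Finset.mem_Icc.2 ⟨hrank_pos g hg, hrank_le g hg⟩
      · rw [hIcard, Finset.card_image_of_injOn (fun g hg g' hg' h =>
          hrank_inj g (Finset.mem_coe.1 hg) g' (Finset.mem_coe.1 hg') h), hIcard]
    -- the rejection set has cardinality bhCount
    have hcardR : ((Finset.Icc 1 G).filter
        (fun g => ((Finset.Icc 1 G).filter (fun g' => p g' ≤ p g)).card ≤ bhCount G q p)).card
        = bhCount G q p := by
      have himgR : ((Finset.Icc 1 G).filter
            (fun g => ((Finset.Icc 1 G).filter (fun g' => p g' ≤ p g)).card ≤ bhCount G q p)).image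
            (fun g => ((Finset.Icc 1 G).filter (fun g' => p g' ≤ p g)).card)
          = Finset.Icc 1 (bhCount G q p) := by
        apply Finset.Subset.antisymm
        · intro x hx
          obtain ⟨g, hg, rfl⟩ := Finset.mem_image.1 hx
          obtain ⟨hg1, hg2⟩ := Finset.mem_filter.1 hg
          exact Finset.mem_Icc.2 ⟨hrank_pos g hg1, hg2⟩
        · intro x hx
          obtain ⟨hx1, hx2⟩ := Finset.mem_Icc.1 hx
          have hxI : x ∈ Finset.Icc 1 G := Finset.mem_Icc.2 ⟨hx1, le_trans hx2 hKG⟩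
          rw [← himg_rank] at hxI
          obtain ⟨g, hg, rfl⟩ := Finset.mem_image.1 hxI
          exact Finset.mem_image.2 ⟨g, Finset.mem_filter.2 ⟨hg, hx2⟩, rfl⟩
      have hinj : Set.InjOn (fun g => ((Finset.Icc 1 G).filter (fun g' => p g' ≤ p g)).card)
          ↑((Finset.Icc 1 G).filter
            (fun g => ((Finset.Icc 1 G).filter (fun g' => p g' ≤ p g)).card ≤ bhCount G q p)) := by
        intro g hg g' hg' h
        have hgI := Finset.filter_subset _ _ (Finset.mem_coe.1 hg)
        have hgI' := Finset.filter_subset _ _ (Finset.mem_coe.1 hg')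
        exact hrank_inj g hgI g' hgI' h
      rw [← Finset.card_image_of_injOn hinj, himgR, Nat.card_Icc]
      omega
    have hKK₀ : bhCount G q p = K₀ := by
      rw [← hcard, ← hR, hRdef]
      exact hcardR.symm
    -- separation
    have hSep : ∀ g ∈ 𝒢, ∀ g' ∈ Finset.Icc 1 G \ 𝒢, p g < p g' := by
      intro g hg g' hg'
      obtain ⟨hg'I, hg'n⟩ := Finset.mem_sdiff.1 hg'
      rw [← hR, hRdef] at hg hg'n
      have h1 := (Finset.mem_filter.1 hg).2
      by_contra hc
      push_neg at hc
      have hsub : (Finset.Icc 1 G).filter (fun x => p x ≤ p g')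
          ⊆ (Finset.Icc 1 G).filter (fun x => p x ≤ p g) := by
        intro x hx
        obtain ⟨hx1, hx2⟩ := Finset.mem_filter.1 hx
        exact Finset.mem_filter.2 ⟨hx1, le_trans hx2 hc⟩
      have h2 := Finset.card_le_card hsub
      exact hg'n (Finset.mem_filter.2 ⟨hg'I, le_trans h2 h1⟩)
    obtain ⟨key1, key2⟩ := key hSep
    constructor
    · -- (a)
      intro g hg
      have hgI := h𝒢 hg
      have hgR : g ∈ (Finset.Icc 1 G).filter
          (fun x => ((Finset.Icc 1 G).filter (fun g' => p g' ≤ p x)).card ≤ bhCount G q p) := by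
        rw [← hRdef, hR]; exact hg
      have hrle : ((Finset.Icc 1 G).filter (fun g' => p g' ≤ p g)).card ≤ K₀ := by
        have := (Finset.mem_filter.1 hgR).2
        omega
      have hple : p g ≤ orderStat (Finset.Icc 1 G) p K₀ := by
        rw [hOSdef K₀]
        refine (rank_le_iff (Finset.mem_image_of_mem p hgI) hK₀ (by omega)).1 ?_
        rw [← hrank g hgI]
        exact hrle
      have hfin : orderStat (Finset.Icc 1 G) p K₀ ≤ (K₀ : ℝ) * q / G := by
        rw [← hKK₀] at *
        exact_mod_cast hKineq
      linarith
    · -- (b)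
      intro k hk
      obtain ⟨hk1, hk2⟩ := Finset.mem_Icc.1 hk
      have hkk : K₀ + k ∈ Finset.Icc 1 G := Finset.mem_Icc.2 ⟨by omega, by omega⟩
      have hnot : ¬ (orderStat (Finset.Icc 1 G) p (K₀ + k) ≤ ((K₀ + k : ℕ) : ℝ) * q / G) := by
        intro hcon
        have hmem : K₀ + k ∈ (Finset.Icc 1 G).filter
            (fun k => orderStat (Finset.Icc 1 G) p k ≤ (k : ℝ) * q / G) :=
          Finset.mem_filter.2 ⟨hkk, hcon⟩
        have := hKle _ hmem
        omega
      have heq := key2 k hk1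
      have hcast : ((K₀ : ℝ) + (k : ℝ)) * q / G = ((K₀ + k : ℕ) : ℝ) * q / G := by
        push_cast; ring
      rw [gt_iff_lt, hcast, ← heq]
      exact not_le.1 hnot
  · -- backward direction
    rintro ⟨ha, hb⟩
    have hSep : ∀ g ∈ 𝒢, ∀ g' ∈ Finset.Icc 1 G \ 𝒢, p g < p g' := by
      intro g hg g' hg'
      have hGK : 1 ≤ G - K₀ := by
        have h1 := Finset.card_pos.2 ⟨g', hg'⟩
        omega
      have hb1 := hb 1 (Finset.mem_Icc.2 ⟨le_refl _, hGK⟩)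
      have hmem : p g' ∈ (Finset.Icc 1 G \ 𝒢).image p := Finset.mem_image_of_mem p hg'
      have h01 : orderStat (Finset.Icc 1 G \ 𝒢) p 1 ≤ p g' := sort_getD_zero_le hmem
      have hlt : (K₀ : ℝ) * q / G < ((K₀ : ℝ) + 1) * q / G := by
        have hdiff : ((K₀ : ℝ) + 1) * q / G - (K₀ : ℝ) * q / G = q / G := by ring
        linarith
      have hb1' : ((K₀ : ℝ) + 1) * q / G < orderStat (Finset.Icc 1 G \ 𝒢) p 1 := by
        have : ((K₀ : ℝ) + ((1 : ℕ) : ℝ)) = (K₀ : ℝ) + 1 := by push_cast; ring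
        rw [← this]
        exact hb1
      have := ha g hg
      linarith
    obtain ⟨key1, key2⟩ := key hSep
    have hcard𝒢 : (𝒢.image p).card = K₀ := by
      rw [Finset.card_image_of_injOn (hdistinct.mono (Finset.coe_subset.2 h𝒢)), hcard]
    have hOS𝒢 : orderStat 𝒢 p K₀ ∈ 𝒢.image p := by
      have := sort_getD_mem (𝒢.image p) (i := K₀ - 1) (by omega)
      exact this
    have hK₀ineq : orderStat (Finset.Icc 1 G) p K₀ ≤ (K₀ : ℝ) * q / G := by
      rw [key1 K₀ hK₀ (le_refl _)]
      obtain ⟨g, hg, hgeq⟩ := Finset.mem_image.1 hOS𝒢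
      rw [← hgeq]
      exact ha g hg
    have hK₀F : K₀ ∈ (Finset.Icc 1 G).filter
        (fun k => orderStat (Finset.Icc 1 G) p k ≤ (k : ℝ) * q / G) :=
      Finset.mem_filter.2 ⟨Finset.mem_Icc.2 ⟨hK₀, hK₀G⟩, hK₀ineq⟩
    have hFle : ∀ k ∈ (Finset.Icc 1 G).filter
        (fun k => orderStat (Finset.Icc 1 G) p k ≤ (k : ℝ) * q / G), k ≤ K₀ := by
      intro k hk
      obtain ⟨hkI, hkle⟩ := Finset.mem_filter.1 hk
      obtain ⟨hk1, hkG⟩ := Finset.mem_Icc.1 hkI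
      by_contra hc
      push_neg at hc
      have heq := key2 (k - K₀) (by omega)
      have hbm := hb (k - K₀) (Finset.mem_Icc.2 ⟨by omega, by omega⟩)
      have hkeq : K₀ + (k - K₀) = k := by omega
      rw [hkeq] at heq
      have hcast : ((K₀ : ℝ) + ((k - K₀ : ℕ) : ℝ)) * q / G = (k : ℝ) * q / G := by
        have : ((k - K₀ : ℕ) : ℝ) = (k : ℝ) - (K₀ : ℝ) := by
          push_cast [Nat.cast_sub (le_of_lt hc)]; ring
        rw [this]; ring
      rw [gt_iff_lt, hcast, ← heq] at hbm
      linarith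
    have hcount : bhCount G q p = K₀ := by
      unfold bhCount
      rw [dif_pos ⟨K₀, hK₀F⟩]
      exact le_antisymm (Finset.max'_le _ _ _ hFle) (Finset.le_max' _ _ hK₀F)
    rw [hRdef]
    ext g
    simp only [Finset.mem_filter, hcount]
    constructor
    · rintro ⟨hgI, hgle⟩
      by_contra hgn
      have hgO : g ∈ Finset.Icc 1 G \ 𝒢 := Finset.mem_sdiff.2 ⟨hgI, hgn⟩
      have hsub : insert g 𝒢 ⊆ (Finset.Icc 1 G).filter (fun g' => p g' ≤ p g) := by
        intro x hx
        rcases Finset.mem_insert.1 hx with rfl | hx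
        · exact Finset.mem_filter.2 ⟨hgI, le_refl _⟩
        · exact Finset.mem_filter.2 ⟨h𝒢 hx, (hSep x hx g hgO).le⟩
      have hle := Finset.card_le_card hsub
      rw [Finset.card_insert_of_notMem hgn, hcard] at hle
      omega
    · intro hg
      refine ⟨h𝒢 hg, ?_⟩
      have hsub : (Finset.Icc 1 G).filter (fun g' => p g' ≤ p g) ⊆ 𝒢 := by
        intro x hx
        obtain ⟨hxI, hxle⟩ := Finset.mem_filter.1 hx
        by_contra hxn
        exact absurd hxle (not_le.2 (hSep g hg x (Finset.mem_sdiff.2 ⟨hxI, hxn⟩)))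
      have := Finset.card_le_card hsub
      omega
end

section
/- Let σ > 0 and let ν be a probability measure on ℝ^d. Let H ⊆ ℝ × ℝ^d be measurable, and set 𝒫(t) = ν({w : (t,w) ∈ H}) for t ∈ ℝ and h(t) = exp(−t²/(2σ²))·𝒫(t). Assume that for a given b ∈ ℝ the normalizer Z(b) = ∫_ℝ exp(b·t/σ²)·h(t) dt satisfies 0 < Z(b) < ∞. Then, for B a real Gaussian N(b, σ²) random variable and W an independent ℝ^d-valued random vector with law ν such that P((B,W) ∈ H) > 0, the conditional law of B given {(B,W) ∈ H} has Lebesgue density t ↦ h(t)·exp(b·t/σ²) / Z(b); in particular, as b varies over the set where 0 < Z(b) < ∞, these conditional laws form a one-parameter exponential family with sufficient statistic t and natural parameter b/σ². -/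
open MeasureTheory ProbabilityTheory

/-- The marginal selection-adjusted law of the target statistic is an exponential family:
if `B ~ N(b, σ²)` and `W ~ ν` are independent, `Psel(t) = ν{w : (t,w) ∈ H}`,
`h(t) = exp(−t²/(2σ²))·Psel(t)` and `0 < Z(b) = ∫ exp(bt/σ²)h(t)dt < ∞`, then the conditional
law of `B` given the selection event `{(B,W) ∈ H}` has Lebesgue density
`t ↦ h(t)·exp(bt/σ²)/Z(b)`, an exponential family with natural parameter `b/σ²`. -/
theorem selection_adjusted_law_exponential_family
    {Ω : Type*} [MeasurableSpace Ω] (P : Measure Ω) [IsProbabilityMeasure P]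
    (b σ : ℝ) (hσ : 0 < σ) (d : ℕ)
    (ν : Measure (Fin d → ℝ)) [IsProbabilityMeasure ν]
    (H : Set (ℝ × (Fin d → ℝ))) (hH : MeasurableSet H)
    (Psel : ℝ → ℝ) (hPsel : ∀ t, Psel t = (ν {w | (t, w) ∈ H}).toReal)
    (h : ℝ → ℝ) (hh : ∀ t, h t = Real.exp (-t ^ 2 / (2 * σ ^ 2)) * Psel t)
    (Z : ℝ) (hZ : Z = ∫ t, Real.exp (b * t / σ ^ 2) * h t)
    (hZint : Integrable (fun t => Real.exp (b * t / σ ^ 2) * h t))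
    (hZpos : 0 < Z)
    (B : Ω → ℝ) (hBmeas : Measurable B)
    (hBlaw : Measure.map B P = gaussianReal b ((σ ^ 2).toNNReal))
    (W : Ω → (Fin d → ℝ)) (hWmeas : Measurable W)
    (hWlaw : Measure.map W P = ν)
    (hindep : IndepFun B W P)
    (hEpos : 0 < P {ω | (B ω, W ω) ∈ H}) :
    Measure.map B (P[|{ω | (B ω, W ω) ∈ H}]) =
      volume.withDensity
        (fun t => ENNReal.ofReal (h t * Real.exp (b * t / σ ^ 2) / Z)) := by
  have hσ2 : (0:ℝ) < σ ^ 2 := by positivity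
  set v : NNReal := (σ ^ 2).toNNReal with hv
  have hvR : ((v : ℝ)) = σ ^ 2 := Real.coe_toNNReal _ hσ2.le
  have hvne : v ≠ 0 := by
    simp [hv, Real.toNNReal_eq_zero, not_le, hσ2, hσ.ne']
  set E : Set Ω := {ω | (B ω, W ω) ∈ H} with hE
  have hpair : Measurable fun ω => (B ω, W ω) := hBmeas.prodMk hWmeas
  have hνmeas : Measurable fun t => ν (Prod.mk t ⁻¹' H) :=
    measurable_measure_prodMk_left hH
  have hjoint : Measure.map (fun ω => (B ω, W ω)) P = (gaussianReal b v).prod ν := by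
    rw [← hBlaw, ← hWlaw]
    exact (indepFun_iff_map_prod_eq_prod_map_map hBmeas.aemeasurable
      hWmeas.aemeasurable).mp hindep
  have hEmeas : MeasurableSet E := hpair hH
  -- nonnegativity facts
  have hPselnn : ∀ t, 0 ≤ Psel t := fun t => by rw [hPsel]; exact ENNReal.toReal_nonneg
  set f : ℝ → ℝ := fun t => Real.exp (b * t / σ ^ 2) * h t with hf
  have hfnn : ∀ t, 0 ≤ f t := fun t => by
    have := hPselnn t
    simp only [hf, hh]
    positivity
  set c : ℝ := (Real.sqrt (2 * Real.pi * σ ^ 2))⁻¹ * Real.exp (-b ^ 2 / (2 * σ ^ 2)) with hc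
  have hcpos : 0 < c := by
    have : (0:ℝ) < Real.sqrt (2 * Real.pi * σ ^ 2) := Real.sqrt_pos.mpr (by positivity)
    positivity
  -- step 1: map of restricted measure
  have key : Measure.map B (P.restrict E)
      = (gaussianReal b v).withDensity (fun t => ν (Prod.mk t ⁻¹' H)) := by
    ext s hs
    rw [Measure.map_apply hBmeas hs, Measure.restrict_apply (hBmeas hs),
      withDensity_apply _ hs]
    have hset : B ⁻¹' s ∩ E = (fun ω => (B ω, W ω)) ⁻¹' ((s ×ˢ Set.univ) ∩ H) := by
      ext ω
      simp [hE, Set.mem_prod]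
    rw [hset, ← Measure.map_apply hpair ((hs.prod MeasurableSet.univ).inter hH), hjoint,
      Measure.prod_apply ((hs.prod MeasurableSet.univ).inter hH)]
    rw [← lintegral_indicator hs]
    congr 1
    funext t
    by_cases hts : t ∈ s
    · rw [Set.indicator_of_mem hts]
      congr 1
      ext w
      simp [hts]
    · rw [Set.indicator_of_notMem hts]
      have : Prod.mk t ⁻¹' ((s ×ˢ Set.univ) ∩ H) = ∅ := by
        ext w; simp [hts]
      simp [this]
  have hg : gaussianReal b v = volume.withDensity (gaussianPDF b v) :=
    gaussianReal_of_var_ne_zero b hvne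
  have key2 : Measure.map B (P.restrict E)
      = volume.withDensity (fun t => gaussianPDF b v t * ν (Prod.mk t ⁻¹' H)) := by
    rw [key, hg, ← withDensity_mul _ (measurable_gaussianPDF b v) hνmeas]
    rfl
  -- pointwise density identity
  have hpoint : ∀ t, gaussianPDF b v t * ν (Prod.mk t ⁻¹' H) = ENNReal.ofReal (c * f t) := by
    intro t
    have hν' : ν (Prod.mk t ⁻¹' H) = ENNReal.ofReal (Psel t) := by
      rw [hPsel]
      exact (ENNReal.ofReal_toReal (measure_ne_top _ _)).symm
    rw [gaussianPDF, hν', ← ENNReal.ofReal_mul (gaussianPDFReal_nonneg b v t)]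
    congr 1
    simp only [hf, hh, gaussianPDFReal, hvR, hc]
    have hexp : Real.exp (-(t - b) ^ 2 / (2 * σ ^ 2))
        = Real.exp (-b ^ 2 / (2 * σ ^ 2)) * (Real.exp (b * t / σ ^ 2)
          * Real.exp (-t ^ 2 / (2 * σ ^ 2))) := by
      rw [← Real.exp_add, ← Real.exp_add]
      congr 1
      field_simp
      ring
    rw [hexp]
    ring
  -- total mass
  have hPE : P E = ENNReal.ofReal (c * Z) := by
    have h1 : P E = Measure.map B (P.restrict E) Set.univ := by
      rw [Measure.map_apply hBmeas MeasurableSet.univ, Set.preimage_univ,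
        Measure.restrict_apply MeasurableSet.univ, Set.univ_inter]
    rw [h1, key2, withDensity_apply _ MeasurableSet.univ, Measure.restrict_univ]
    simp only [hpoint]
    rw [← ofReal_integral_eq_lintegral_ofReal (hZint.const_mul c)
      (Filter.Eventually.of_forall fun t => mul_nonneg hcpos.le (hfnn t))]
    congr 1
    rw [integral_const_mul, hZ]
  -- conclude
  rw [ProbabilityTheory.cond, Measure.map_smul, key2, hPE,
    ← withDensity_smul _ (show Measurable (fun t => gaussianPDF b v t * ν (Prod.mk t ⁻¹' H)) from
      (measurable_gaussianPDF b v).mul hνmeas)]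
  congr 1
  funext t
  simp only [Pi.smul_apply, smul_eq_mul, hpoint t]
  rw [← ENNReal.ofReal_inv_of_pos (mul_pos hcpos hZpos),
    ← ENNReal.ofReal_mul (by positivity)]
  congr 1
  field_simp
  ring
end

section
/- Let b ∈ ℝ and σ, γ, τ > 0. Let B be a real Gaussian N(b, σ²) random variable, W a real Gaussian N(0, γ²) random variable, and Z an ℝ^p-valued random vector with law N(0, τ²I_p), with B, W, Z mutually independent. Fix P, q₀ ∈ ℝ, s ∈ {−1,1}, a vector A ∈ ℝ^p, a vector c ∈ ℝ^p, and an invertible matrix M ∈ ℝ^{p×p}, and define the reparameterized variables η(t, w) = s·(w − P·t − q₀) and o(t, z) = M⁻¹(z − A·t − c). Let C₁ ⊆ ℝ and C₂ ⊆ ℝ^p be measurable sets such that the selection event {η(B, W) ∈ C₁ and o(B, Z) ∈ C₂} has positive probability. Then the conditional law of B given this event has Lebesgue density proportional to t ↦ exp(−(t−b)²/(2σ²)) · P(η(t, W) ∈ C₁) · P(o(t, Z) ∈ C₂). -/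
open MeasureTheory ProbabilityTheory Real
open scoped NNReal ENNReal

private lemma ofReal_mul_aux (a e r x y : ℝ) (ha : 0 < a) (he : 0 ≤ e) (hr : 0 ≤ r)
    (hx : 0 ≤ x) (hy : 0 ≤ y) :
    (ENNReal.ofReal a)⁻¹ * (ENNReal.ofReal (r * e) * (ENNReal.ofReal x * ENNReal.ofReal y)) =
      ENNReal.ofReal (a⁻¹ * r * (e * x * y)) := by
  rw [← ENNReal.ofReal_inv_of_pos ha, ← ENNReal.ofReal_mul hx,
    ← ENNReal.ofReal_mul (mul_nonneg hr he), ← ENNReal.ofReal_mul (inv_nonneg.mpr ha.le)]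
  congr 1
  ring

/-- Change-of-variables lemma for the selection-adjusted law: after reparameterizing the
eGene-screening randomization `W` and the LASSO randomization `Z` through the affine KKT
maps `η(t,w) = s(w − Pt − q₀)` and `o(t,z) = M⁻¹(z − At − c)`, the conditional law of the
target statistic `B ~ N(b,σ²)` given the selection event
`{η(B,W) ∈ C₁, o(B,Z) ∈ C₂}` has Lebesgue density proportional to
`t ↦ exp(−(t−b)²/(2σ²))·P(η(t,W) ∈ C₁)·P(o(t,Z) ∈ C₂)`. -/
theorem change_of_variables_selection_adjusted_law
    {Ω : Type*} [MeasurableSpace Ω] (P : Measure Ω) [IsProbabilityMeasure P]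
    (b σ γ τ : ℝ) (hσ : 0 < σ) (hγ : 0 < γ) (hτ : 0 < τ) (p : ℕ) (hp : 1 ≤ p)
    (B : Ω → ℝ) (hBmeas : Measurable B)
    (hBlaw : Measure.map B P = gaussianReal b ((σ ^ 2).toNNReal))
    (W : Ω → ℝ) (hWmeas : Measurable W)
    (hWlaw : Measure.map W P = gaussianReal 0 ((γ ^ 2).toNNReal))
    (Z : Ω → (Fin p → ℝ)) (hZmeas : Measurable Z)
    (hZlaw : Measure.map Z P = Measure.pi (fun _ => gaussianReal 0 ((τ ^ 2).toNNReal)))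
    (hindepB : IndepFun B (fun ω => (W ω, Z ω)) P)
    (hindepWZ : IndepFun W Z P)
    (Pc q₀ : ℝ) (s : ℝ) (hs : s = -1 ∨ s = 1)
    (A c : Fin p → ℝ) (M : Matrix (Fin p) (Fin p) ℝ) (hM : IsUnit M.det)
    (η : ℝ → ℝ → ℝ) (hη : η = fun t w => s * (w - Pc * t - q₀))
    (o : ℝ → (Fin p → ℝ) → (Fin p → ℝ))
    (ho : o = fun t z => M⁻¹.mulVec (z - (fun i => t * A i) - c))
    (C₁ : Set ℝ) (hC₁ : MeasurableSet C₁)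
    (C₂ : Set (Fin p → ℝ)) (hC₂ : MeasurableSet C₂)
    (E : Set Ω) (hE : E = {ω | η (B ω) (W ω) ∈ C₁ ∧ o (B ω) (Z ω) ∈ C₂})
    (hEpos : 0 < P E) :
    ∃ kc : ℝ, 0 < kc ∧
      Measure.map B (P[|E]) =
        volume.withDensity (fun t => ENNReal.ofReal
          (kc * (Real.exp (-(t - b) ^ 2 / (2 * σ ^ 2)) *
            (P {ω | η t (W ω) ∈ C₁}).toReal * (P {ω | o t (Z ω) ∈ C₂}).toReal))) := by
  classical
  have hσ2 : (0:ℝ) < σ ^ 2 := by positivity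
  set v : ℝ≥0 := (σ ^ 2).toNNReal with hvdef
  have hvne : v ≠ 0 := by
    simp only [hvdef, ne_eq, Real.toNNReal_eq_zero, not_le]
    exact hσ2
  have hvcoe : (v : ℝ) = σ ^ 2 := Real.coe_toNNReal _ hσ2.le
  set ν₁ : Measure ℝ := gaussianReal 0 ((γ ^ 2).toNNReal) with hν₁
  set ν₂ : Measure (Fin p → ℝ) := Measure.pi (fun _ => gaussianReal 0 ((τ ^ 2).toNNReal)) with hν₂
  -- measurability of the reparameterization maps
  have hηm : Measurable (fun q : ℝ × ℝ => η q.1 q.2) := by rw [hη]; fun_prop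
  have hom : Measurable (fun q : ℝ × (Fin p → ℝ) => o q.1 q.2) := by
    rw [ho]
    refine (M⁻¹.mulVecLin.continuous_of_finiteDimensional).measurable.comp ?_
    refine measurable_pi_lambda _ (fun i => ?_)
    simp only [Pi.sub_apply]
    fun_prop
  -- sections
  set g₁ : ℝ → Set ℝ := fun t => {w | η t w ∈ C₁} with hg₁
  set g₂ : ℝ → Set (Fin p → ℝ) := fun t => {z | o t z ∈ C₂} with hg₂
  have hg₁m : ∀ t, MeasurableSet (g₁ t) := fun t =>
    (hηm.comp (measurable_prodMk_left (x := t))) hC₁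
  have hg₂m : ∀ t, MeasurableSet (g₂ t) := fun t =>
    (hom.comp (measurable_prodMk_left (x := t))) hC₂
  have hg₁meas : Measurable (fun t => ν₁ (g₁ t)) :=
    measurable_measure_prodMk_left (hηm hC₁)
  have hg₂meas : Measurable (fun t => ν₂ (g₂ t)) :=
    measurable_measure_prodMk_left (hom hC₂)
  -- identify the P-probabilities with the laws
  have hP1 : ∀ t, P {ω | η t (W ω) ∈ C₁} = ν₁ (g₁ t) := fun t => by
    rw [show {ω | η t (W ω) ∈ C₁} = W ⁻¹' (g₁ t) from rfl,
      ← Measure.map_apply hWmeas (hg₁m t), hWlaw]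
  have hP2 : ∀ t, P {ω | o t (Z ω) ∈ C₂} = ν₂ (g₂ t) := fun t => by
    rw [show {ω | o t (Z ω) ∈ C₂} = Z ⁻¹' (g₂ t) from rfl,
      ← Measure.map_apply hZmeas (hg₂m t), hZlaw]
  -- the full selection set in the product space
  set F : Ω → ℝ × (ℝ × (Fin p → ℝ)) := fun ω => (B ω, (W ω, Z ω)) with hF
  have hFm : Measurable F := hBmeas.prodMk (hWmeas.prodMk hZmeas)
  set Sfull : Set (ℝ × (ℝ × (Fin p → ℝ))) :=
    {q | η q.1 q.2.1 ∈ C₁ ∧ o q.1 q.2.2 ∈ C₂} with hSf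
  have h1 : Measurable (fun q : ℝ × (ℝ × (Fin p → ℝ)) => η q.1 q.2.1) :=
    hηm.comp (measurable_fst.prodMk measurable_snd.fst)
  have h2 : Measurable (fun q : ℝ × (ℝ × (Fin p → ℝ)) => o q.1 q.2.2) :=
    hom.comp (measurable_fst.prodMk measurable_snd.snd)
  have hSfull : MeasurableSet Sfull := (h1 hC₁).inter (h2 hC₂)
  have hEF : E = F ⁻¹' Sfull := by rw [hE]; rfl
  have hEmeas : MeasurableSet E := hEF ▸ hFm hSfull
  -- joint law factorizes
  have hmapWZ : Measure.map (fun ω => (W ω, Z ω)) P = ν₁.prod ν₂ := by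
    rw [(indepFun_iff_map_prod_eq_prod_map_map hWmeas.aemeasurable hZmeas.aemeasurable).mp
      hindepWZ, hWlaw, hZlaw]
  have hmapF : Measure.map F P = (gaussianReal b v).prod (ν₁.prod ν₂) := by
    rw [hF, (indepFun_iff_map_prod_eq_prod_map_map hBmeas.aemeasurable
      (hWmeas.prodMk hZmeas).aemeasurable).mp hindepB, hBlaw, hmapWZ]
  -- key computation
  have key : ∀ U : Set ℝ, MeasurableSet U →
      P (E ∩ B ⁻¹' U) =
        ∫⁻ t in U, gaussianPDF b v t * (ν₁ (g₁ t) * ν₂ (g₂ t)) := by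
    intro U hU
    have hEU : E ∩ B ⁻¹' U = F ⁻¹' ((U ×ˢ Set.univ) ∩ Sfull) := by
      rw [hE]
      ext ω
      simp only [Set.mem_inter_iff, Set.mem_setOf_eq, Set.mem_preimage, Set.mem_prod,
        Set.mem_univ, and_true, hSf, hF]
      tauto
    have hUS : MeasurableSet ((U ×ˢ Set.univ) ∩ Sfull) :=
      (hU.prod MeasurableSet.univ).inter hSfull
    rw [hEU, ← Measure.map_apply hFm hUS, hmapF, Measure.prod_apply hUS]
    have hsec : ∀ t, (ν₁.prod ν₂) (Prod.mk t ⁻¹' ((U ×ˢ Set.univ) ∩ Sfull))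
        = U.indicator (fun t => ν₁ (g₁ t) * ν₂ (g₂ t)) t := by
      intro t
      by_cases ht : t ∈ U
      · rw [Set.indicator_of_mem ht, ← Measure.prod_prod]
        congr 1
        ext x
        simp only [Set.mem_preimage, Set.mem_inter_iff, Set.mem_prod, Set.mem_univ, and_true,
          hSf, Set.mem_setOf_eq, ht, true_and, hg₁, hg₂]
      · rw [Set.indicator_of_notMem ht]
        have hemp : Prod.mk t ⁻¹' ((U ×ˢ Set.univ) ∩ Sfull) = ∅ := by
          ext x
          simp [ht]
        rw [hemp, measure_empty]
    simp_rw [hsec]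
    rw [lintegral_indicator hU, gaussianReal_of_var_ne_zero _ hvne]
    exact setLIntegral_withDensity_eq_setLIntegral_mul volume (measurable_gaussianPDF b v)
        (hg₁meas.mul hg₂meas) hU
  -- conclusion
  have haP : (0:ℝ) < (P E).toReal := ENNReal.toReal_pos hEpos.ne' (measure_ne_top P E)
  refine ⟨(P E).toReal⁻¹ * (Real.sqrt (2 * π * σ ^ 2))⁻¹, by positivity, ?_⟩
  ext U hU
  rw [Measure.map_apply hBmeas hU, cond_apply hEmeas P, key U hU, withDensity_apply _ hU,
    ← lintegral_const_mul' _ _ (ENNReal.inv_ne_top.mpr hEpos.ne')]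
  refine lintegral_congr fun t => ?_
  rw [hP1 t, hP2 t]
  have hpdf : gaussianPDF b v t =
      ENNReal.ofReal ((Real.sqrt (2 * π * σ ^ 2))⁻¹ * Real.exp (-(t - b) ^ 2 / (2 * σ ^ 2))) := by
    unfold gaussianPDF gaussianPDFReal
    rw [hvcoe]
  have hx : ν₁ (g₁ t) = ENNReal.ofReal ((ν₁ (g₁ t)).toReal) :=
    (ENNReal.ofReal_toReal (measure_ne_top _ _)).symm
  have hy : ν₂ (g₂ t) = ENNReal.ofReal ((ν₂ (g₂ t)).toReal) :=
    (ENNReal.ofReal_toReal (measure_ne_top _ _)).symm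
  have hPE : P E = ENNReal.ofReal ((P E).toReal) :=
    (ENNReal.ofReal_toReal (measure_ne_top _ _)).symm
  calc (P E)⁻¹ * (gaussianPDF b v t * (ν₁ (g₁ t) * ν₂ (g₂ t)))
      = (ENNReal.ofReal ((P E).toReal))⁻¹ *
          (ENNReal.ofReal ((Real.sqrt (2 * π * σ ^ 2))⁻¹ *
            Real.exp (-(t - b) ^ 2 / (2 * σ ^ 2))) *
          (ENNReal.ofReal ((ν₁ (g₁ t)).toReal) * ENNReal.ofReal ((ν₂ (g₂ t)).toReal))) := by
        rw [← hpdf, ← hx, ← hy, ← hPE]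
    _ = ENNReal.ofReal ((P E).toReal⁻¹ * (Real.sqrt (2 * π * σ ^ 2))⁻¹ *
          (Real.exp (-(t - b) ^ 2 / (2 * σ ^ 2)) * (ν₁ (g₁ t)).toReal * (ν₂ (g₂ t)).toReal)) :=
        ofReal_mul_aux _ _ _ _ _ haP (Real.exp_nonneg _)
          (inv_nonneg.mpr (Real.sqrt_nonneg _)) ENNReal.toReal_nonneg ENNReal.toReal_nonneg
end
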